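/- For all p ∈ [1, 1.7], the Banach–Mazur distance from ℓ_p^3 to ℓ_∞^3 is at most 9/5. -/

import Mathlib

open scoped Pointwise

/-- The `p`-norm on `ℝ³` (for a real exponent `p ≥ 1`). -/
noncomputable def pnorm (p : ℝ) (x : Fin 3 → ℝ) : ℝ :=
  (∑ i, |x i| ^ p) ^ (1 / p)

/-- The unit ball of `ℓ_p^3`. -/
def ballP (p : ℝ) : Set (Fin 3 → ℝ) := {x | pnorm p x ≤ 1}

/-- The unit ball of `ℓ_∞^3`. -/
def ballInf : Set (Fin 3 → ℝ) := {x | ∀ i, |x i| ≤ 1}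

/-- The multiplicative Banach–Mazur distance between origin-symmetric convex
bodies: `inf {γ ≥ 1 : ∃ nonsingular linear T, T(L) ⊆ K ⊆ γ T(L)}`. -/
noncomputable def BMdist (K L : Set (Fin 3 → ℝ)) : ℝ :=
  sInf {γ : ℝ | 1 ≤ γ ∧ ∃ T : (Fin 3 → ℝ) ≃ₗ[ℝ] (Fin 3 → ℝ),
    (T : (Fin 3 → ℝ) →ₗ[ℝ] (Fin 3 → ℝ)) '' L ⊆ K ∧
    K ⊆ γ • ((T : (Fin 3 → ℝ) →ₗ[ℝ] (Fin 3 → ℝ)) '' L)}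

open Real

section helpers
lemma rpow_le_num {a b e : ℝ} (ha : 0 ≤ a) (hb : 0 ≤ b) (n d : ℕ) (hd : d ≠ 0)
    (he : e * d = n) (h : a ^ n ≤ b ^ d) : a ^ e ≤ b := by
  have key : (a ^ e) ^ d = a ^ n := by
    rw [← Real.rpow_natCast (a ^ e) d, ← Real.rpow_mul ha, he, Real.rpow_natCast]
  exact le_of_pow_le_pow_left₀ hd hb (le_of_eq_of_le key h)

lemma num_le_rpow {a b e : ℝ} (ha : 0 ≤ a) (hb : 0 ≤ b) (n d : ℕ) (hd : d ≠ 0)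
    (he : e * d = n) (h : b ^ d ≤ a ^ n) : b ≤ a ^ e := by
  have key : (a ^ e) ^ d = a ^ n := by
    rw [← Real.rpow_natCast (a ^ e) d, ← Real.rpow_mul ha, he, Real.rpow_natCast]
  exact le_of_pow_le_pow_left₀ hd (Real.rpow_nonneg ha e) (by rw [key]; exact h)


lemma convex_max (g : ℝ → ℝ) (hg : ConvexOn ℝ Set.univ g) {t : ℝ} (h1 : -1 ≤ t) (h2 : t ≤ 1) :
    g t ≤ max (g (-1)) (g 1) :=
  hg.le_on_segment (Set.mem_univ _) (Set.mem_univ _)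
    (by rw [segment_eq_Icc (by norm_num : (-1:ℝ) ≤ 1)]; exact ⟨h1, h2⟩)


lemma convex_term {p : ℝ} (hp : 1 ≤ p) (α β : ℝ) :
    ConvexOn ℝ Set.univ (fun t : ℝ => |α*t+β| ^ p) := by
  refine ⟨convex_univ, fun x _ y _ a b ha hb hab => ?_⟩
  simp only [smul_eq_mul]
  have e : α*(a*x+b*y)+β = a*(α*x+β)+b*(α*y+β) := by linear_combination (-β) * hab
  calc |α*(a*x+b*y)+β| ^ p ≤ (a*|α*x+β| + b*|α*y+β|) ^ p := by
        apply Real.rpow_le_rpow (abs_nonneg _) _ (by linarith)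
        rw [e]
        calc |a*(α*x+β)+b*(α*y+β)| ≤ |a*(α*x+β)| + |b*(α*y+β)| := abs_add_le _ _
          _ = a*|α*x+β| + b*|α*y+β| := by rw [abs_mul, abs_mul, abs_of_nonneg ha, abs_of_nonneg hb]
    _ ≤ a*|α*x+β| ^ p + b*|α*y+β| ^ p := by
        have := (convexOn_rpow hp).2 (Set.mem_Ici.2 (abs_nonneg (α*x+β)))
          (Set.mem_Ici.2 (abs_nonneg (α*y+β))) ha hb hab
        simpa [smul_eq_mul] using this

lemma rpow_sq (p : ℝ) : (4:ℝ)^p = ((2:ℝ)^p)^(2:ℕ) := by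
  rw [← Real.rpow_natCast ((2:ℝ)^p) 2, ← Real.rpow_mul (by norm_num : (0:ℝ) ≤ 2),
    mul_comm, Real.rpow_mul (by norm_num : (0:ℝ) ≤ 2), Real.rpow_natCast]
  norm_num

lemma rpow_cube (p : ℝ) : (8:ℝ)^p = ((2:ℝ)^p)^(3:ℕ) := by
  rw [← Real.rpow_natCast ((2:ℝ)^p) 3, ← Real.rpow_mul (by norm_num : (0:ℝ) ≤ 2),
    mul_comm, Real.rpow_mul (by norm_num : (0:ℝ) ≤ 2), Real.rpow_natCast]
  norm_num

lemma cube_le {p : ℝ} (hp : 1 ≤ p) : 3*(4:ℝ)^p ≤ 2*2^p + 8^p := by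
  have ht : (2:ℝ) ≤ 2^p := by
    calc (2:ℝ) = 2^(1:ℝ) := (Real.rpow_one 2).symm
      _ ≤ 2^p := Real.rpow_le_rpow_of_exponent_le (by norm_num) hp
  rw [rpow_sq, rpow_cube]
  have h := mul_nonneg (mul_nonneg (by linarith : (0:ℝ) ≤ 2^p)
    (by linarith : (0:ℝ) ≤ 2^p - 1)) (by linarith : (0:ℝ) ≤ 2^p - 2)
  nlinarith [h]

lemma rpow_chord {a r0 r1 p p0 p1 : ℝ} (ha : 0 < a) (h01 : p0 < p1)
    (hp0 : p0 ≤ p) (hp1 : p ≤ p1) (h0 : a ^ p0 ≤ r0) (h1 : a ^ p1 ≤ r1) :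
    a ^ p ≤ (1 - (p - p0)/(p1 - p0)) * r0 + ((p - p0)/(p1 - p0)) * r1 := by
  set θ := (p - p0)/(p1 - p0) with hθdef
  have hd : 0 < p1 - p0 := by linarith
  have hθ0 : 0 ≤ θ := div_nonneg (by linarith) hd.le
  have hθ1 : θ ≤ 1 := by rw [hθdef, div_le_one hd]; linarith
  have hw : (1-θ) + θ = 1 := by ring
  have hexp : p0 * (1-θ) + p1 * θ = p := by
    rw [hθdef]; field_simp; ring
  have hsplit : a ^ p = (a ^ p0) ^ (1-θ) * (a ^ p1) ^ θ := by
    rw [← Real.rpow_mul ha.le, ← Real.rpow_mul ha.le, ← Real.rpow_add ha, hexp]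
  rw [hsplit]
  calc (a ^ p0) ^ (1-θ) * (a ^ p1) ^ θ ≤ (1-θ) * (a^p0) + θ * (a^p1) :=
        Real.geom_mean_le_arith_mean2_weighted (by linarith) hθ0
          (Real.rpow_nonneg ha.le _) (Real.rpow_nonneg ha.le _) hw
    _ ≤ (1-θ)*r0 + θ*r1 := by
        have g1 : (1-θ) * (a^p0) ≤ (1-θ)*r0 := mul_le_mul_of_nonneg_left h0 (by linarith)
        have g2 : θ * (a^p1) ≤ θ*r1 := mul_le_mul_of_nonneg_left h1 hθ0
        linarith

lemma master_on {p p0 p1 K r20 r21 r80 r81 s0 s1 : ℝ}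
    (hp0 : p0 ≤ p) (hp1 : p ≤ p1) (h01 : p0 < p1) (hK : 0 < K)
    (hr20 : (2:ℝ) ^ p0 ≤ r20) (hr21 : (2:ℝ) ^ p1 ≤ r21)
    (hr80 : (8:ℝ) ^ p0 ≤ r80) (hr81 : (8:ℝ) ^ p1 ≤ r81)
    (hs0 : (K/12) ^ p0 ≤ s0) (hs1 : (K/12) ^ p1 ≤ s1)
    (hquad : ∀ θ : ℝ, 0 ≤ θ → θ ≤ 1 →
      (2*((1-θ)*r20 + θ*r21) + ((1-θ)*r80 + θ*r81)) * ((1-θ)*s0 + θ*s1) ≤ K) :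
    2*(2:ℝ)^p + 8^p ≤ K * (12/K) ^ p := by
  have hK12 : (0:ℝ) < K/12 := by positivity
  set θ := (p - p0)/(p1 - p0) with hθdef
  have hd : 0 < p1 - p0 := by linarith
  have hθ0 : 0 ≤ θ := div_nonneg (by linarith) hd.le
  have hθ1 : θ ≤ 1 := by rw [hθdef, div_le_one hd]; linarith
  have h2 := rpow_chord (by norm_num : (0:ℝ) < 2) h01 hp0 hp1 hr20 hr21
  have h8 := rpow_chord (by norm_num : (0:ℝ) < 8) h01 hp0 hp1 hr80 hr81
  have hs := rpow_chord hK12 h01 hp0 hp1 hs0 hs1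
  have hspos : 0 < (K/12) ^ p := Real.rpow_pos_of_pos hK12 p
  have hσ : 0 < (1-θ)*s0 + θ*s1 := lt_of_lt_of_le hspos hs
  have hq := hquad θ hθ0 hθ1
  have hKp : K * (12/K) ^ p = K / (K/12) ^ p := by
    rw [show (12/K : ℝ) = (K/12)⁻¹ by rw [inv_div], Real.inv_rpow hK12.le]
    exact (div_eq_mul_inv _ _).symm
  rw [hKp]
  calc 2*(2:ℝ)^p + 8^p ≤ 2*((1-θ)*r20 + θ*r21) + ((1-θ)*r80 + θ*r81) := by linarith
    _ ≤ K / ((1-θ)*s0 + θ*s1) := by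
        rw [le_div_iff₀ hσ]
        have hA : (0:ℝ) ≤ 2*((1-θ)*r20 + θ*r21) + ((1-θ)*r80 + θ*r81) := by
          have := Real.rpow_pos_of_pos (show (0:ℝ) < 2 by norm_num) p
          have := Real.rpow_pos_of_pos (show (0:ℝ) < 8 by norm_num) p
          linarith
        exact hq
    _ ≤ K / (K/12) ^ p := by
        apply div_le_div_of_nonneg_left hK.le hspos hs

-- generic per-interval bound: (2*3^q+1)^(1/q) * (2*2^p+8^p)^(1/p) ≤ 36
lemma holder_on {p q p0 p1 q1 k K r20 r21 r80 r81 s0 s1 : ℝ}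
    (hp : 1 < p) (hq : q = p/(p-1))
    (hp0 : p0 ≤ p) (hp1 : p ≤ p1) (h01 : p0 < p1) (hp1gt : 1 < p1)
    (hq1 : q1 = p1/(p1-1))
    (hk : ((1:ℝ)/3) ^ q1 ≤ k) (hkpos : 0 < k) (hKdef : K = 2 + k)
    (hr20 : (2:ℝ) ^ p0 ≤ r20) (hr21 : (2:ℝ) ^ p1 ≤ r21)
    (hr80 : (8:ℝ) ^ p0 ≤ r80) (hr81 : (8:ℝ) ^ p1 ≤ r81)
    (hs0 : (K/12) ^ p0 ≤ s0) (hs1 : (K/12) ^ p1 ≤ s1)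
    (hquad : ∀ θ : ℝ, 0 ≤ θ → θ ≤ 1 →
      (2*((1-θ)*r20 + θ*r21) + ((1-θ)*r80 + θ*r81)) * ((1-θ)*s0 + θ*s1) ≤ K) :
    (2*(3:ℝ)^q + 1) ^ (1/q) * (2*(2:ℝ)^p + 8^p) ^ (1/p) ≤ 36 := by
  have hK : 0 < K := by rw [hKdef]; linarith
  have hppos : 0 < p - 1 := by linarith
  have hqpos : 0 < q := by rw [hq]; positivity
  have hq1le : q1 ≤ q := by
    rw [hq, hq1, div_le_div_iff₀ (by linarith) hppos]
    nlinarith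
  -- 3^(-q) ≤ k
  have h3q : (3:ℝ) ^ (-q) ≤ k := by
    have e : (3:ℝ) ^ (-q) = ((1:ℝ)/3) ^ q := by
      rw [one_div, Real.inv_rpow (by norm_num : (0:ℝ) ≤ 3), ← Real.rpow_neg (by norm_num : (0:ℝ) ≤ 3)]
    rw [e]
    exact le_trans (Real.rpow_le_rpow_of_exponent_ge (by norm_num) (by norm_num) hq1le) hk
  have hKq : 2 + (3:ℝ)^(-q) ≤ K := by rw [hKdef]; linarith
  -- factorization
  have hfact : 2*(3:ℝ)^q + 1 = 3^q * (2 + 3^(-q)) := by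
    have h0 : (3:ℝ)^q * 3^(-q) = 1 := by
      rw [← Real.rpow_add (by norm_num : (0:ℝ) < 3)]; norm_num
    rw [mul_add, h0]; ring
  have h3qpos : (0:ℝ) < 3^q := Real.rpow_pos_of_pos (by norm_num) q
  have step1 : (2*(3:ℝ)^q + 1) ^ (1/q) ≤ 3 * K ^ (1/q) := by
    have hle : 2*(3:ℝ)^q + 1 ≤ 3^q * K := by
      rw [hfact]; exact mul_le_mul_of_nonneg_left hKq h3qpos.le
    calc (2*(3:ℝ)^q + 1) ^ (1/q) ≤ (3^q * K) ^ (1/q) :=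
          Real.rpow_le_rpow (by positivity) hle (by positivity)
      _ = 3 * K ^ (1/q) := by
          rw [Real.mul_rpow h3qpos.le hK.le, ← Real.rpow_mul (by norm_num : (0:ℝ) ≤ 3),
            mul_one_div_cancel hqpos.ne', Real.rpow_one]
  have hmaster := master_on hp0 hp1 h01 hK hr20 hr21 hr80 hr81 hs0 hs1 hquad
  have hApos : (0:ℝ) < 2*(2:ℝ)^p + 8^p := by
    have := Real.rpow_pos_of_pos (show (0:ℝ) < 2 by norm_num) p
    have := Real.rpow_pos_of_pos (show (0:ℝ) < 8 by norm_num) p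
    linarith
  have step2 : (2*(2:ℝ)^p + 8^p) ^ (1/p) ≤ K ^ (1/p) * (12/K) := by
    calc (2*(2:ℝ)^p + 8^p) ^ (1/p) ≤ (K * (12/K)^p) ^ (1/p) :=
          Real.rpow_le_rpow hApos.le hmaster (by positivity)
      _ = K ^ (1/p) * (12/K) := by
          rw [Real.mul_rpow hK.le (Real.rpow_nonneg (by positivity) p),
            ← Real.rpow_mul (by positivity : (0:ℝ) ≤ 12/K),
            mul_one_div_cancel (by positivity : (p:ℝ) ≠ 0), Real.rpow_one]
  have hsum : 1/q + 1/p = 1 := by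
    rw [hq]; field_simp; ring
  calc (2*(3:ℝ)^q + 1) ^ (1/q) * (2*(2:ℝ)^p + 8^p) ^ (1/p)
      ≤ (3 * K ^ (1/q)) * (K ^ (1/p) * (12/K)) := by
        apply mul_le_mul step1 step2 (Real.rpow_nonneg hApos.le _) (by positivity)
    _ = 36 * (K ^ (1/q) * K ^ (1/p)) / K := by ring
    _ = 36 := by
        rw [← Real.rpow_add hK, hsum, Real.rpow_one, mul_div_assoc,
          div_self hK.ne', mul_one]

lemma interval0 {p q : ℝ} (hp : 1 < p) (hq : q = p/(p-1))
    (hp0 : 1 ≤ p) (hp1 : p ≤ (21/20)) :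
    (2*(3:ℝ)^q + 1) ^ (1/q) * (2*(2:ℝ)^p + 8^p) ^ (1/p) ≤ 36 := by
  refine holder_on (p0 := 1) (p1 := (21/20)) (q1 := 21) (k := (1/10000000)) (K := (20000001/10000000))
    (r20 := 2) (r21 := (10353/5000)) (r80 := 8) (r81 := (44383/5000))
    (s0 := (6666667/40000000)) (s1 := (381/2500))
    hp hq hp0 hp1 (by norm_num) (by norm_num) (by norm_num)
    (rpow_le_num (by norm_num) (by norm_num) 21 1 (by norm_num) (by norm_num) (by norm_num)) (by norm_num) (by norm_num)
    (rpow_le_num (by norm_num) (by norm_num) 1 1 (by norm_num) (by norm_num) (by norm_num)) (rpow_le_num (by norm_num) (by norm_num) 21 20 (by norm_num) (by norm_num) (by norm_num)) (rpow_le_num (by norm_num) (by norm_num) 1 1 (by norm_num) (by norm_num) (by norm_num)) (rpow_le_num (by norm_num) (by norm_num) 21 20 (by norm_num) (by norm_num) (by norm_num))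
    (rpow_le_num (by norm_num) (by norm_num) 1 1 (by norm_num) (by norm_num) (by norm_num)) (rpow_le_num (by norm_num) (by norm_num) 21 20 (by norm_num) (by norm_num) (by norm_num))
    ?_
  intro θ h0 h1
  nlinarith [sq_nonneg (θ - 0), mul_nonneg h0 (by linarith : (0:ℝ) ≤ 1 - θ), sq_nonneg θ, sq_nonneg (1-θ)]

lemma interval1 {p q : ℝ} (hp : 1 < p) (hq : q = p/(p-1))
    (hp0 : (21/20) ≤ p) (hp1 : p ≤ (23/20)) :
    (2*(3:ℝ)^q + 1) ^ (1/q) * (2*(2:ℝ)^p + 8^p) ^ (1/p) ≤ 36 := by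
  refine holder_on (p0 := (21/20)) (p1 := (23/20)) (q1 := (23/3)) (k := (2199/10000000)) (K := (20002199/10000000))
    (r20 := (10353/5000)) (r21 := (1387/625)) (r80 := (44383/5000)) (r81 := (27321/2500))
    (s0 := (61/400)) (s1 := (51/400))
    hp hq hp0 hp1 (by norm_num) (by norm_num) (by norm_num)
    (rpow_le_num (by norm_num) (by norm_num) 23 3 (by norm_num) (by norm_num) (by norm_num)) (by norm_num) (by norm_num)
    (rpow_le_num (by norm_num) (by norm_num) 21 20 (by norm_num) (by norm_num) (by norm_num)) (rpow_le_num (by norm_num) (by norm_num) 23 20 (by norm_num) (by norm_num) (by norm_num)) (rpow_le_num (by norm_num) (by norm_num) 21 20 (by norm_num) (by norm_num) (by norm_num)) (rpow_le_num (by norm_num) (by norm_num) 23 20 (by norm_num) (by norm_num) (by norm_num))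
    (rpow_le_num (by norm_num) (by norm_num) 21 20 (by norm_num) (by norm_num) (by norm_num)) (rpow_le_num (by norm_num) (by norm_num) 23 20 (by norm_num) (by norm_num) (by norm_num))
    ?_
  intro θ h0 h1
  nlinarith [sq_nonneg (θ - (279/1000)), mul_nonneg h0 (by linarith : (0:ℝ) ≤ 1 - θ), sq_nonneg θ, sq_nonneg (1-θ)]

lemma interval2 {p q : ℝ} (hp : 1 < p) (hq : q = p/(p-1))
    (hp0 : (23/20) ≤ p) (hp1 : p ≤ (13/10)) :
    (2*(3:ℝ)^q + 1) ^ (1/q) * (2*(2:ℝ)^p + 8^p) ^ (1/p) ≤ 36 := by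
  refine holder_on (p0 := (23/20)) (p1 := (13/10)) (q1 := (13/3)) (k := (85601/10000000)) (K := (20085601/10000000))
    (r20 := (1387/625)) (r21 := (24623/10000)) (r80 := (27321/2500)) (r81 := (74643/5000))
    (s0 := (1281/10000)) (s1 := (49/500))
    hp hq hp0 hp1 (by norm_num) (by norm_num) (by norm_num)
    (rpow_le_num (by norm_num) (by norm_num) 13 3 (by norm_num) (by norm_num) (by norm_num)) (by norm_num) (by norm_num)
    (rpow_le_num (by norm_num) (by norm_num) 23 20 (by norm_num) (by norm_num) (by norm_num)) (rpow_le_num (by norm_num) (by norm_num) 13 10 (by norm_num) (by norm_num) (by norm_num)) (rpow_le_num (by norm_num) (by norm_num) 23 20 (by norm_num) (by norm_num) (by norm_num)) (rpow_le_num (by norm_num) (by norm_num) 13 10 (by norm_num) (by norm_num) (by norm_num))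
    (rpow_le_num (by norm_num) (by norm_num) 23 20 (by norm_num) (by norm_num) (by norm_num)) (rpow_le_num (by norm_num) (by norm_num) 13 10 (by norm_num) (by norm_num) (by norm_num))
    ?_
  intro θ h0 h1
  nlinarith [sq_nonneg (θ - (83/200)), mul_nonneg h0 (by linarith : (0:ℝ) ≤ 1 - θ), sq_nonneg θ, sq_nonneg (1-θ)]

lemma interval3 {p q : ℝ} (hp : 1 < p) (hq : q = p/(p-1))
    (hp0 : (13/10) ≤ p) (hp1 : p ≤ (29/20)) :
    (2*(3:ℝ)^q + 1) ^ (1/q) * (2*(2:ℝ)^p + 8^p) ^ (1/p) ≤ 36 := by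
  refine holder_on (p0 := (13/10)) (p1 := (29/20)) (q1 := (29/9)) (k := (145071/5000000)) (K := (10145071/5000000))
    (r20 := (24623/10000)) (r21 := (27321/10000)) (r80 := (74643/5000)) (r81 := (20393/1000))
    (s0 := (993/10000)) (s1 := (19/250))
    hp hq hp0 hp1 (by norm_num) (by norm_num) (by norm_num)
    (rpow_le_num (by norm_num) (by norm_num) 29 9 (by norm_num) (by norm_num) (by norm_num)) (by norm_num) (by norm_num)
    (rpow_le_num (by norm_num) (by norm_num) 13 10 (by norm_num) (by norm_num) (by norm_num)) (rpow_le_num (by norm_num) (by norm_num) 29 20 (by norm_num) (by norm_num) (by norm_num)) (rpow_le_num (by norm_num) (by norm_num) 13 10 (by norm_num) (by norm_num) (by norm_num)) (rpow_le_num (by norm_num) (by norm_num) 29 20 (by norm_num) (by norm_num) (by norm_num))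
    (rpow_le_num (by norm_num) (by norm_num) 13 10 (by norm_num) (by norm_num) (by norm_num)) (rpow_le_num (by norm_num) (by norm_num) 29 20 (by norm_num) (by norm_num) (by norm_num))
    ?_
  intro θ h0 h1
  nlinarith [sq_nonneg (θ - (239/500)), mul_nonneg h0 (by linarith : (0:ℝ) ≤ 1 - θ), sq_nonneg θ, sq_nonneg (1-θ)]

lemma interval4 {p q : ℝ} (hp : 1 < p) (hq : q = p/(p-1))
    (hp0 : (29/20) ≤ p) (hp1 : p ≤ (8/5)) :
    (2*(3:ℝ)^q + 1) ^ (1/q) * (2*(2:ℝ)^p + 8^p) ^ (1/p) ≤ 36 := by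
  refine holder_on (p0 := (29/20)) (p1 := (8/5)) (q1 := (8/3)) (k := (534167/10000000)) (K := (20534167/10000000))
    (r20 := (27321/10000)) (r21 := (6063/2000)) (r80 := (20393/1000)) (r81 := (278577/10000))
    (s0 := (387/5000)) (s1 := (297/5000))
    hp hq hp0 hp1 (by norm_num) (by norm_num) (by norm_num)
    (rpow_le_num (by norm_num) (by norm_num) 8 3 (by norm_num) (by norm_num) (by norm_num)) (by norm_num) (by norm_num)
    (rpow_le_num (by norm_num) (by norm_num) 29 20 (by norm_num) (by norm_num) (by norm_num)) (rpow_le_num (by norm_num) (by norm_num) 8 5 (by norm_num) (by norm_num) (by norm_num)) (rpow_le_num (by norm_num) (by norm_num) 29 20 (by norm_num) (by norm_num) (by norm_num)) (rpow_le_num (by norm_num) (by norm_num) 8 5 (by norm_num) (by norm_num) (by norm_num))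
    (rpow_le_num (by norm_num) (by norm_num) 29 20 (by norm_num) (by norm_num) (by norm_num)) (rpow_le_num (by norm_num) (by norm_num) 8 5 (by norm_num) (by norm_num) (by norm_num))
    ?_
  intro θ h0 h1
  nlinarith [sq_nonneg (θ - (547/1000)), mul_nonneg h0 (by linarith : (0:ℝ) ≤ 1 - θ), sq_nonneg θ, sq_nonneg (1-θ)]

lemma interval5 {p q : ℝ} (hp : 1 < p) (hq : q = p/(p-1))
    (hp0 : (8/5) ≤ p) (hp1 : p ≤ (17/10)) :
    (2*(3:ℝ)^q + 1) ^ (1/q) * (2*(2:ℝ)^p + 8^p) ^ (1/p) ≤ 36 := by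
  refine holder_on (p0 := (8/5)) (p1 := (17/10)) (q1 := (17/7)) (k := (693869/10000000)) (K := (20693869/10000000))
    (r20 := (6063/2000)) (r21 := (32491/10000)) (r80 := (278577/10000)) (r81 := (42871/1250))
    (s0 := (601/10000)) (s1 := (63/1250))
    hp hq hp0 hp1 (by norm_num) (by norm_num) (by norm_num)
    (rpow_le_num (by norm_num) (by norm_num) 17 7 (by norm_num) (by norm_num) (by norm_num)) (by norm_num) (by norm_num)
    (rpow_le_num (by norm_num) (by norm_num) 8 5 (by norm_num) (by norm_num) (by norm_num)) (rpow_le_num (by norm_num) (by norm_num) 17 10 (by norm_num) (by norm_num) (by norm_num)) (rpow_le_num (by norm_num) (by norm_num) 8 5 (by norm_num) (by norm_num) (by norm_num)) (rpow_le_num (by norm_num) (by norm_num) 17 10 (by norm_num) (by norm_num) (by norm_num))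
    (rpow_le_num (by norm_num) (by norm_num) 8 5 (by norm_num) (by norm_num) (by norm_num)) (rpow_le_num (by norm_num) (by norm_num) 17 10 (by norm_num) (by norm_num) (by norm_num))
    ?_
  intro θ h0 h1
  nlinarith [sq_nonneg (θ - (631/1000)), mul_nonneg h0 (by linarith : (0:ℝ) ≤ 1 - θ), sq_nonneg θ, sq_nonneg (1-θ)]

lemma outer_master {p q : ℝ} (hp : 1 < p) (hp17 : p ≤ 17/10) (hq : q = p/(p-1)) :
    (2*(3:ℝ)^q + 1) ^ (1/q) * (2*(2:ℝ)^p + 8^p) ^ (1/p) ≤ 36 := by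
  rcases le_or_gt p (21/20) with h1|h1
  · exact interval0 hp hq (by linarith) h1
  rcases le_or_gt p (23/20) with h2|h2
  · exact interval1 hp hq h1.le h2
  rcases le_or_gt p (13/10) with h3|h3
  · exact interval2 hp hq h2.le h3
  rcases le_or_gt p (29/20) with h4|h4
  · exact interval3 hp hq h3.le h4
  rcases le_or_gt p (8/5) with h5|h5
  · exact interval4 hp hq h4.le h5
  · exact interval5 hp hq h5.le hp17

lemma outer_core {p : ℝ} (hp1 : 1 ≤ p) (hp2 : p ≤ 17/10) {u v w : ℝ}
    (hu : 0 ≤ u) (hv : 0 ≤ v) (hw : 0 ≤ w) (hsum : u^p + v^p + w^p ≤ 1) :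
    3*u + 3*v + w ≤ 36 * (2*(2:ℝ)^p + 8^p) ^ (-(1/p)) := by
  have h2p : (0:ℝ) < 2^p := Real.rpow_pos_of_pos (by norm_num) p
  have h8p : (0:ℝ) < 8^p := Real.rpow_pos_of_pos (by norm_num) p
  have hApos : (0:ℝ) < 2*(2:ℝ)^p + 8^p := by linarith
  have hrw : 36 * (2*(2:ℝ)^p + 8^p) ^ (-(1/p)) = 36 / (2*(2:ℝ)^p + 8^p) ^ (1/p) := by
    rw [Real.rpow_neg hApos.le]; exact (div_eq_mul_inv _ _).symm
  rw [hrw]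
  rcases eq_or_lt_of_le hp1 with heq|hp
  · -- p = 1
    subst heq
    simp only [Real.rpow_one] at hsum ⊢
    have e : ((14:ℝ)) ^ ((1:ℝ)/1) = 14 := by norm_num [Real.rpow_one]
    rw [show (2*(2:ℝ) + 8 : ℝ) = 12 by norm_num]
    rw [show ((1:ℝ)/1) = (1:ℝ) by norm_num, Real.rpow_one]
    linarith
  · set q := p/(p-1) with hq
    have hppos : 0 < p := by linarith
    have hpq : Real.HolderConjugate p q := (Real.holderConjugate_iff_eq_conjExponent hp).2 hq
    have h := Real.inner_le_Lp_mul_Lq_of_nonneg (s := Finset.univ)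
      (f := ![u,v,w]) (g := ![3,3,1]) hpq
      (by intro i _; fin_cases i <;> simp [hu, hv, hw])
      (by intro i _; fin_cases i <;> norm_num)
    simp only [Fin.sum_univ_three, Matrix.cons_val_zero, Matrix.cons_val_one,
      Matrix.head_cons, Matrix.cons_val_two, Matrix.tail_cons, Real.one_rpow] at h
    have hfq : (3:ℝ)^q + 3^q + 1 = 2*3^q + 1 := by ring
    have hfp : (u^p + v^p + w^p) ^ (1/p) ≤ 1 :=
      Real.rpow_le_one (by positivity) hsum (by positivity)
    have hX : (0:ℝ) ≤ (2*(3:ℝ)^q + 1) ^ (1/q) := Real.rpow_nonneg (by positivity) _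
    have hmaster := outer_master hp hp2 hq
    have hApow : (0:ℝ) < (2*(2:ℝ)^p + 8^p) ^ (1/p) := Real.rpow_pos_of_pos hApos _
    -- from h : u*3+v*3+w ≤ (u^p+v^p+w^p)^(1/p) * (3^q+3^q+1)^(1/q)
    have h2 : 3*u + 3*v + w ≤ (2*(3:ℝ)^q + 1) ^ (1/q) := by
      have := h
      rw [hfq] at this
      calc 3*u + 3*v + w = u*3 + v*3 + w*1 := by ring
        _ ≤ (u^p + v^p + w^p)^(1/p) * (2*(3:ℝ)^q + 1)^(1/q) := this
        _ ≤ 1 * (2*(3:ℝ)^q + 1)^(1/q) :=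
            mul_le_mul_of_nonneg_right hfp (by positivity)
        _ = (2*(3:ℝ)^q + 1)^(1/q) := one_mul _
    refine h2.trans ?_
    rw [le_div_iff₀ hApow]
    exact hmaster

lemma inner_key {p : ℝ} (hp : 1 ≤ p) {a b c : ℝ}
    (ha1 : -1 ≤ a) (ha2 : a ≤ 1) (hb1 : -1 ≤ b) (hb2 : b ≤ 1) (hc1 : -1 ≤ c) (hc2 : c ≤ 1) :
    |(-3)*a + ((-3)*b + 2*c)|^p + (|2*a + ((-3)*b + (-3)*c)|^p + |(-3)*a + (2*b + (-3)*c)|^p) ≤ 2*(2:ℝ)^p + 8^p := by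
  have H := convex_max (fun t : ℝ => |(-3)*t + ((-3)*b + 2*c)|^p + (|2*t + ((-3)*b + (-3)*c)|^p + |(-3)*t + (2*b + (-3)*c)|^p)) ((convex_term hp (-3) ((-3)*b + 2*c)).add ((convex_term hp 2 ((-3)*b + (-3)*c)).add (convex_term hp (-3) (2*b + (-3)*c)))) ha1 ha2
  beta_reduce at H
  refine le_trans H (max_le ?_ ?_)
  · -- a = -1
    rw [show ((-3):ℝ)*(-1) + ((-3)*b + 2*c) = (-3)*b + (2*c + 3) from by ring,
        show (2:ℝ)*(-1) + ((-3)*b + (-3)*c) = (-3)*b + ((-3)*c + (-2)) from by ring,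
        show ((-3):ℝ)*(-1) + (2*b + (-3)*c) = 2*b + ((-3)*c + 3) from by ring]
    have H2 := convex_max (fun t : ℝ => |(-3)*t + (2*c + 3)|^p + (|(-3)*t + ((-3)*c + (-2))|^p + |2*t + ((-3)*c + 3)|^p)) ((convex_term hp (-3) (2*c + 3)).add ((convex_term hp (-3) ((-3)*c + (-2))).add (convex_term hp 2 ((-3)*c + 3)))) hb1 hb2
    beta_reduce at H2
    refine le_trans H2 (max_le ?_ ?_)
    · -- b = -1
      rw [show ((-3):ℝ)*(-1) + (2*c + 3) = 2*c + 6 from by ring,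
          show ((-3):ℝ)*(-1) + ((-3)*c + (-2)) = (-3)*c + 1 from by ring,
          show (2:ℝ)*(-1) + ((-3)*c + 3) = (-3)*c + 1 from by ring]
      have H3 := convex_max (fun t : ℝ => |2*t + 6|^p + (|(-3)*t + 1|^p + |(-3)*t + 1|^p)) ((convex_term hp 2 6).add ((convex_term hp (-3) 1).add (convex_term hp (-3) 1))) hc1 hc2
      beta_reduce at H3
      refine le_trans H3 (max_le ?_ ?_)
      · -- c = -1: profile [4, 4, 4]
        rw [show (2:ℝ)*(-1) + 6 = 4 from by norm_num,
            show ((-3):ℝ)*(-1) + 1 = 4 from by norm_num,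
            show |(4:ℝ)| = 4 from by norm_num]
        linarith [cube_le hp]
      · -- c = 1: profile [8, -2, -2]
        rw [show (2:ℝ)*1 + 6 = 8 from by norm_num,
            show ((-3):ℝ)*1 + 1 = (-2) from by norm_num,
            show |(8:ℝ)| = 8 from by norm_num,
            show |(-2:ℝ)| = 2 from by norm_num]
        linarith []
    · -- b = 1
      rw [show ((-3):ℝ)*1 + (2*c + 3) = 2*c + 0 from by ring,
          show ((-3):ℝ)*1 + ((-3)*c + (-2)) = (-3)*c + (-5) from by ring,
          show (2:ℝ)*1 + ((-3)*c + 3) = (-3)*c + 5 from by ring]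
      have H3 := convex_max (fun t : ℝ => |2*t + 0|^p + (|(-3)*t + (-5)|^p + |(-3)*t + 5|^p)) ((convex_term hp 2 0).add ((convex_term hp (-3) (-5)).add (convex_term hp (-3) 5))) hc1 hc2
      beta_reduce at H3
      refine le_trans H3 (max_le ?_ ?_)
      · -- c = -1: profile [-2, -2, 8]
        rw [show (2:ℝ)*(-1) + 0 = (-2) from by norm_num,
            show ((-3):ℝ)*(-1) + (-5) = (-2) from by norm_num,
            show ((-3):ℝ)*(-1) + 5 = 8 from by norm_num,
            show |(-2:ℝ)| = 2 from by norm_num,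
            show |(8:ℝ)| = 8 from by norm_num]
        linarith []
      · -- c = 1: profile [2, -8, 2]
        rw [show (2:ℝ)*1 + 0 = 2 from by norm_num,
            show ((-3):ℝ)*1 + (-5) = (-8) from by norm_num,
            show ((-3):ℝ)*1 + 5 = 2 from by norm_num,
            show |(2:ℝ)| = 2 from by norm_num,
            show |(-8:ℝ)| = 8 from by norm_num]
        linarith []
  · -- a = 1
    rw [show ((-3):ℝ)*1 + ((-3)*b + 2*c) = (-3)*b + (2*c + (-3)) from by ring,
        show (2:ℝ)*1 + ((-3)*b + (-3)*c) = (-3)*b + ((-3)*c + 2) from by ring,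
        show ((-3):ℝ)*1 + (2*b + (-3)*c) = 2*b + ((-3)*c + (-3)) from by ring]
    have H2 := convex_max (fun t : ℝ => |(-3)*t + (2*c + (-3))|^p + (|(-3)*t + ((-3)*c + 2)|^p + |2*t + ((-3)*c + (-3))|^p)) ((convex_term hp (-3) (2*c + (-3))).add ((convex_term hp (-3) ((-3)*c + 2)).add (convex_term hp 2 ((-3)*c + (-3))))) hb1 hb2
    beta_reduce at H2
    refine le_trans H2 (max_le ?_ ?_)
    · -- b = -1
      rw [show ((-3):ℝ)*(-1) + (2*c + (-3)) = 2*c + 0 from by ring,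
          show ((-3):ℝ)*(-1) + ((-3)*c + 2) = (-3)*c + 5 from by ring,
          show (2:ℝ)*(-1) + ((-3)*c + (-3)) = (-3)*c + (-5) from by ring]
      have H3 := convex_max (fun t : ℝ => |2*t + 0|^p + (|(-3)*t + 5|^p + |(-3)*t + (-5)|^p)) ((convex_term hp 2 0).add ((convex_term hp (-3) 5).add (convex_term hp (-3) (-5)))) hc1 hc2
      beta_reduce at H3
      refine le_trans H3 (max_le ?_ ?_)
      · -- c = -1: profile [-2, 8, -2]
        rw [show (2:ℝ)*(-1) + 0 = (-2) from by norm_num,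
            show ((-3):ℝ)*(-1) + 5 = 8 from by norm_num,
            show ((-3):ℝ)*(-1) + (-5) = (-2) from by norm_num,
            show |(-2:ℝ)| = 2 from by norm_num,
            show |(8:ℝ)| = 8 from by norm_num]
        linarith []
      · -- c = 1: profile [2, 2, -8]
        rw [show (2:ℝ)*1 + 0 = 2 from by norm_num,
            show ((-3):ℝ)*1 + 5 = 2 from by norm_num,
            show ((-3):ℝ)*1 + (-5) = (-8) from by norm_num,
            show |(2:ℝ)| = 2 from by norm_num,
            show |(-8:ℝ)| = 8 from by norm_num]
        linarith []
    · -- b = 1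
      rw [show ((-3):ℝ)*1 + (2*c + (-3)) = 2*c + (-6) from by ring,
          show ((-3):ℝ)*1 + ((-3)*c + 2) = (-3)*c + (-1) from by ring,
          show (2:ℝ)*1 + ((-3)*c + (-3)) = (-3)*c + (-1) from by ring]
      have H3 := convex_max (fun t : ℝ => |2*t + (-6)|^p + (|(-3)*t + (-1)|^p + |(-3)*t + (-1)|^p)) ((convex_term hp 2 (-6)).add ((convex_term hp (-3) (-1)).add (convex_term hp (-3) (-1)))) hc1 hc2
      beta_reduce at H3
      refine le_trans H3 (max_le ?_ ?_)
      · -- c = -1: profile [-8, 2, 2]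
        rw [show (2:ℝ)*(-1) + (-6) = (-8) from by norm_num,
            show ((-3):ℝ)*(-1) + (-1) = 2 from by norm_num,
            show |(-8:ℝ)| = 8 from by norm_num,
            show |(2:ℝ)| = 2 from by norm_num]
        linarith []
      · -- c = 1: profile [-4, -4, -4]
        rw [show (2:ℝ)*1 + (-6) = (-4) from by norm_num,
            show ((-3):ℝ)*1 + (-1) = (-4) from by norm_num,
            show |(-4:ℝ)| = 4 from by norm_num]
        linarith [cube_le hp]

end helpers

noncomputable def Tmap (cc : ℝ) (hcc : cc ≠ 0) : (Fin 3 → ℝ) ≃ₗ[ℝ] (Fin 3 → ℝ) where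
  toFun x := ![cc * ((-3)*x 0 + ((-3)*x 1 + 2*x 2)),
               cc * (2*x 0 + ((-3)*x 1 + (-3)*x 2)),
               cc * ((-3)*x 0 + (2*x 1 + (-3)*x 2))]
  map_add' x y := by
    funext i; fin_cases i <;> simp <;> ring
  map_smul' m x := by
    funext i; fin_cases i <;> simp <;> ring
  invFun y := ![cc⁻¹ * (((-3)*y 0 + (1*y 1 + (-3)*y 2))/20),
                cc⁻¹ * (((-3)*y 0 + ((-3)*y 1 + 1*y 2))/20),
                cc⁻¹ * ((1*y 0 + ((-3)*y 1 + (-3)*y 2))/20)]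
  left_inv x := by
    funext i; fin_cases i <;> (simp; field_simp; ring)
  right_inv y := by
    funext i; fin_cases i <;> (simp; field_simp; ring)

lemma Tmap_apply (cc : ℝ) (hcc : cc ≠ 0) (x : Fin 3 → ℝ) :
    (Tmap cc hcc) x = ![cc * ((-3)*x 0 + ((-3)*x 1 + 2*x 2)),
               cc * (2*x 0 + ((-3)*x 1 + (-3)*x 2)),
               cc * ((-3)*x 0 + (2*x 1 + (-3)*x 2))] := rfl

theorem bm_lp3_linf3_le_first_portion (p : ℝ) (hp1 : 1 ≤ p) (hp2 : p ≤ 1.7) :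
    BMdist (ballP p) ballInf ≤ 9 / 5 := by
  have hp2' : p ≤ 17/10 := by norm_num at hp2 ⊢; linarith
  have hppos : 0 < p := by linarith
  have h2p : (0:ℝ) < 2^p := Real.rpow_pos_of_pos (by norm_num) p
  have h8p : (0:ℝ) < 8^p := Real.rpow_pos_of_pos (by norm_num) p
  set A := 2*(2:ℝ)^p + 8^p with hAdef
  have hA : 0 < A := by positivity
  set cc := A ^ (-(1/p)) with hccdef
  have hcc : 0 < cc := Real.rpow_pos_of_pos hA _
  have hccp : cc ^ p = A⁻¹ := by
    rw [hccdef, ← Real.rpow_mul hA.le]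
    rw [show -(1/p) * p = -1 by field_simp, Real.rpow_neg_one]
  apply csInf_le ⟨1, fun γ hγ => hγ.1⟩
  refine ⟨by norm_num, Tmap cc hcc.ne', ?_, ?_⟩
  · -- T(cube) ⊆ ballP p
    rintro y ⟨z, hz, rfl⟩
    have hzi : ∀ i, |z i| ≤ 1 := hz
    simp only [LinearEquiv.coe_coe, Tmap_apply]
    show pnorm p _ ≤ 1
    unfold pnorm
    rw [Fin.sum_univ_three]
    simp only [Matrix.cons_val_zero, Matrix.cons_val_one, Matrix.head_cons,
      Matrix.cons_val_two, Matrix.tail_cons]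
    have habs : ∀ X : ℝ, |cc * X| ^ p = cc^p * |X|^p := by
      intro X
      rw [abs_mul, abs_of_pos hcc, Real.mul_rpow hcc.le (abs_nonneg _)]
    rw [habs, habs, habs, hccp]
    have hkey := inner_key hp1 (abs_le.1 (hzi 0)).1 (abs_le.1 (hzi 0)).2
      (abs_le.1 (hzi 1)).1 (abs_le.1 (hzi 1)).2 (abs_le.1 (hzi 2)).1 (abs_le.1 (hzi 2)).2
    have hle1 : A⁻¹ * |(-3)*z 0 + ((-3)*z 1 + 2*z 2)|^p +
        A⁻¹ * |2*z 0 + ((-3)*z 1 + (-3)*z 2)|^p + A⁻¹ * |(-3)*z 0 + (2*z 1 + (-3)*z 2)|^p ≤ 1 := by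
      have hs : A⁻¹ * |(-3)*z 0 + ((-3)*z 1 + 2*z 2)|^p +
        A⁻¹ * |2*z 0 + ((-3)*z 1 + (-3)*z 2)|^p + A⁻¹ * |(-3)*z 0 + (2*z 1 + (-3)*z 2)|^p
        = A⁻¹ * (|(-3)*z 0 + ((-3)*z 1 + 2*z 2)|^p +
          (|2*z 0 + ((-3)*z 1 + (-3)*z 2)|^p + |(-3)*z 0 + (2*z 1 + (-3)*z 2)|^p)) := by ring
      rw [hs]
      calc A⁻¹ * _ ≤ A⁻¹ * A := by
            apply mul_le_mul_of_nonneg_left _ (inv_nonneg.2 hA.le)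
            exact hkey
        _ = 1 := inv_mul_cancel₀ hA.ne'
    calc (A⁻¹ * |(-3)*z 0 + ((-3)*z 1 + 2*z 2)|^p +
        A⁻¹ * |2*z 0 + ((-3)*z 1 + (-3)*z 2)|^p + A⁻¹ * |(-3)*z 0 + (2*z 1 + (-3)*z 2)|^p) ^ (1/p)
        ≤ 1 ^ (1/p) := by
          apply Real.rpow_le_rpow _ hle1 (by positivity)
          positivity
      _ = 1 := Real.one_rpow _
  · -- ballP p ⊆ (9/5) • T(cube)
    intro x hx
    have hxp : (∑ i, |x i| ^ p) ≤ 1 := by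
      have h0 : (0:ℝ) ≤ ∑ i, |x i| ^ p := by positivity
      have := Real.rpow_le_rpow (Real.rpow_nonneg h0 _) hx hppos.le
      rw [Real.one_rpow, ← Real.rpow_mul h0, one_div, inv_mul_cancel₀ hppos.ne',
        Real.rpow_one] at this
      exact this
    rw [Fin.sum_univ_three] at hxp
    -- witness
    set z : Fin 3 → ℝ := ![cc⁻¹ * (5/9) * (((-3)*x 0 + (1*x 1 + (-3)*x 2))/20),
                cc⁻¹ * (5/9) * (((-3)*x 0 + ((-3)*x 1 + 1*x 2))/20),
                cc⁻¹ * (5/9) * ((1*x 0 + ((-3)*x 1 + (-3)*x 2))/20)] with hzdef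
    rw [Set.mem_smul_set]
    refine ⟨(Tmap cc hcc.ne' : (Fin 3 → ℝ) →ₗ[ℝ] (Fin 3 → ℝ)) z, ⟨z, ?_, rfl⟩, ?_⟩
    · -- z ∈ ballInf
      intro i
      have hoc : ∀ u v w : ℝ, 0 ≤ u → 0 ≤ v → 0 ≤ w → u^p + v^p + w^p ≤ 1 →
          3*u + 3*v + w ≤ 36 * cc := fun u v w hu hv hw hs => outer_core hp1 hp2' hu hv hw hs
      have e36 : (0:ℝ) < 36 * cc := by positivity
      have habs1 : |cc⁻¹| = cc⁻¹ := abs_of_pos (by positivity)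
      have key : ∀ Y : ℝ, |Y| ≤ 36*cc → |cc⁻¹ * (5/9) * (Y/20)| ≤ 1 := by
        intro Y hY
        rw [show cc⁻¹ * (5/9) * (Y/20) = (cc⁻¹ * (5/9)/20) * Y from by ring]
        calc |(cc⁻¹ * (5/9)/20) * Y| = (cc⁻¹ * (5/9)/20) * |Y| := by
              rw [abs_mul, abs_of_pos (by positivity : (0:ℝ) < cc⁻¹ * (5/9)/20)]
          _ ≤ (cc⁻¹ * (5/9)/20) * (36*cc) := by
              exact mul_le_mul_of_nonneg_left hY (by positivity)
          _ = 1 := by field_simp; ring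
      fin_cases i
      · show |cc⁻¹ * (5/9) * (((-3)*x 0 + (1*x 1 + (-3)*x 2))/20)| ≤ 1
        apply key
        have htr : |(-3)*x 0 + (1*x 1 + (-3)*x 2)| ≤ 3*|x 0| + 3*|x 2| + |x 1| := by
          calc |(-3)*x 0 + (1*x 1 + (-3)*x 2)| ≤ |(-3)*x 0| + |1*x 1 + (-3)*x 2| := abs_add_le _ _
            _ ≤ |(-3)*x 0| + (|1*x 1| + |(-3)*x 2|) := by linarith [abs_add_le (1*x 1) ((-3)*x 2)]
            _ ≤ 3*|x 0| + 3*|x 2| + |x 1| := by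
                rw [abs_mul, abs_mul, abs_mul]
                simp only [abs_neg, abs_one, abs_of_nonneg (by norm_num : (0:ℝ) ≤ 3)]
                linarith
        have hb := hoc (|x 0|) (|x 2|) (|x 1|) (abs_nonneg _) (abs_nonneg _) (abs_nonneg _)
          (by linarith)
        exact le_trans htr (by linarith)
      · show |cc⁻¹ * (5/9) * (((-3)*x 0 + ((-3)*x 1 + 1*x 2))/20)| ≤ 1
        apply key
        have htr : |(-3)*x 0 + ((-3)*x 1 + 1*x 2)| ≤ 3*|x 0| + 3*|x 1| + |x 2| := by
          calc |(-3)*x 0 + ((-3)*x 1 + 1*x 2)| ≤ |(-3)*x 0| + |(-3)*x 1 + 1*x 2| := abs_add_le _ _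
            _ ≤ |(-3)*x 0| + (|(-3)*x 1| + |1*x 2|) := by linarith [abs_add_le ((-3)*x 1) (1*x 2)]
            _ ≤ 3*|x 0| + 3*|x 1| + |x 2| := by
                rw [abs_mul, abs_mul, abs_mul]
                simp only [abs_neg, abs_one, abs_of_nonneg (by norm_num : (0:ℝ) ≤ 3)]
                linarith
        have hb := hoc (|x 0|) (|x 1|) (|x 2|) (abs_nonneg _) (abs_nonneg _) (abs_nonneg _)
          (by linarith)
        exact le_trans htr (by linarith)
      · show |cc⁻¹ * (5/9) * ((1*x 0 + ((-3)*x 1 + (-3)*x 2))/20)| ≤ 1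
        apply key
        have htr : |1*x 0 + ((-3)*x 1 + (-3)*x 2)| ≤ 3*|x 1| + 3*|x 2| + |x 0| := by
          calc |1*x 0 + ((-3)*x 1 + (-3)*x 2)| ≤ |1*x 0| + |(-3)*x 1 + (-3)*x 2| := abs_add_le _ _
            _ ≤ |1*x 0| + (|(-3)*x 1| + |(-3)*x 2|) := by linarith [abs_add_le ((-3)*x 1) ((-3)*x 2)]
            _ ≤ 3*|x 1| + 3*|x 2| + |x 0| := by
                rw [abs_mul, abs_mul, abs_mul]
                simp only [abs_neg, abs_one, abs_of_nonneg (by norm_num : (0:ℝ) ≤ 3)]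
                linarith
        have hb := hoc (|x 1|) (|x 2|) (|x 0|) (abs_nonneg _) (abs_nonneg _) (abs_nonneg _)
          (by linarith)
        exact le_trans htr (by linarith)
    · -- (9/5) • T z = x
      funext i
      fin_cases i <;>
        (simp [Pi.smul_apply, LinearEquiv.coe_coe, Tmap_apply, hzdef,
          Matrix.cons_val_zero, Matrix.cons_val_one, Matrix.head_cons,
          Matrix.cons_val_two, Matrix.tail_cons, smul_eq_mul];
         field_simp; ring)
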